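/- Let (m₁,m₂,m₃,ξ,p) be a collision solution of the reduced two-body system on [t₀, t*), i.e. ξ(t) → +∞ as t → t*⁻. Then m₃ grows at most like ξ^{−1/2}: there exist M > 0 and t₁ ∈ [t₀, t*) such that |m₃(t)|·√(ξ(t)) ≤ M for all t ∈ [t₁, t*). -/

import Mathlib

open Filter Set

/-- The filter of approach `t → t*⁻`, where `t* ∈ ℝ ∪ {±∞}` is encoded as an `EReal`:
for finite `t*` this is `𝓝[<] t*`, and for `t* = ⊤` it is `atTop`. -/
noncomputable def approachFilter (tstar : EReal) : Filter ℝ :=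
  Filter.comap (fun t : ℝ => (t : EReal)) (nhdsWithin tstar (Set.Iio tstar))

/-- A function whose derivative vanishes on `[t₀, t*)` is constant there. -/
lemma const_on_of_deriv_zero (t0 : ℝ) (tstar : EReal) (f : ℝ → ℝ)
    (hd : ∀ t : ℝ, t0 ≤ t → (t : EReal) < tstar → HasDerivAt f 0 t) :
    ∀ t : ℝ, t0 ≤ t → (t : EReal) < tstar → f t = f t0 := by
  intro t ht ht'
  have hmem : ∀ x ∈ Icc t0 t, (x : EReal) < tstar := fun x hx =>
    lt_of_le_of_lt (EReal.coe_le_coe_iff.2 hx.2) ht'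
  have hcont : ContinuousOn f (Icc t0 t) := fun x hx =>
    ((hd x hx.1 (hmem x hx)).continuousAt).continuousWithinAt
  have hder : ∀ x ∈ Ico t0 t, HasDerivWithinAt f 0 (Ici x) x := fun x hx =>
    (hd x hx.1 (hmem x ⟨hx.1, le_of_lt hx.2⟩)).hasDerivWithinAt
  exact constant_of_has_deriv_right_zero hcont hder t (right_mem_Icc.2 ht)

/-- Along a collision solution of the reduced two-body system (`ξ(t) → +∞` as `t → t*⁻`),
`m₃` grows at most like `ξ^(−1/2)`: there are `M > 0` and `t₁ ∈ [t₀, t*)` with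
`|m₃(t)| · √(ξ(t)) ≤ M` for all `t ∈ [t₁, t*)`. -/
theorem m3_le_inv_sqrt_xi_at_collision
    (t0 : ℝ) (tstar : EReal) (ht0 : (t0 : EReal) < tstar)
    (m1 m2 m3 xi p : ℝ → ℝ)
    (hm1 : ∀ t : ℝ, t0 ≤ t → (t : EReal) < tstar →
      HasDerivAt m1 (xi t * (-(m2 t)^2 + (m3 t)^2 + 2 * m2 t * m3 t * xi t)) t)
    (hm2 : ∀ t : ℝ, t0 ≤ t → (t : EReal) < tstar →
      HasDerivAt m2 (m1 t * m2 t * xi t - m3 t * p t - 2 * m1 t * m3 t * (xi t)^2) t)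
    (hm3 : ∀ t : ℝ, t0 ≤ t → (t : EReal) < tstar →
      HasDerivAt m3 (m2 t * p t - m1 t * m3 t * xi t) t)
    (hxi : ∀ t : ℝ, t0 ≤ t → (t : EReal) < tstar →
      HasDerivAt xi (-((xi t)^2 + 1) * (2 * p t - m1 t)) t)
    (hp : ∀ t : ℝ, t0 ≤ t → (t : EReal) < tstar →
      HasDerivAt p (-((xi t)^2 + 1) * (1 + m2 t * m3 t - 2 * (m3 t)^2 * xi t)) t)
    (hcoll : Tendsto xi (approachFilter tstar) atTop) :
    ∃ M > (0 : ℝ), ∃ t1 : ℝ, (t0 ≤ t1 ∧ (t1 : EReal) < tstar) ∧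
      ∀ t : ℝ, t1 ≤ t → (t : EReal) < tstar → |m3 t| * Real.sqrt (xi t) ≤ M := by
  -- The angular-momentum magnitude is conserved
  have hNc : ∀ t : ℝ, t0 ≤ t → (t : EReal) < tstar →
      (m1 t)^2 + (m2 t)^2 + (m3 t)^2 = (m1 t0)^2 + (m2 t0)^2 + (m3 t0)^2 := by
    apply const_on_of_deriv_zero t0 tstar (fun s => (m1 s)^2 + (m2 s)^2 + (m3 s)^2)
    intro t ht ht'
    have h1 := hm1 t ht ht'
    have h2 := hm2 t ht ht'
    have h3 := hm3 t ht ht'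
    have := ((h1.pow 2).add (h2.pow 2)).add (h3.pow 2)
    refine this.congr_deriv ?_
    push_cast
    ring
  -- The energy is conserved
  have hEc : ∀ t : ℝ, t0 ≤ t → (t : EReal) < tstar →
      (p t)^2 - m1 t * p t + (m3 t)^2 * (xi t)^2 - m2 t * m3 t * xi t - xi t
      = (p t0)^2 - m1 t0 * p t0 + (m3 t0)^2 * (xi t0)^2 - m2 t0 * m3 t0 * xi t0 - xi t0 := by
    apply const_on_of_deriv_zero t0 tstar
      (fun s => (p s)^2 - m1 s * p s + (m3 s)^2 * (xi s)^2 - m2 s * m3 s * xi s - xi s)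
    intro t ht ht'
    have h1 := hm1 t ht ht'
    have h2 := hm2 t ht ht'
    have h3 := hm3 t ht ht'
    have h4 := hxi t ht ht'
    have h5 := hp t ht ht'
    have := ((((h5.pow 2).sub (h1.mul h5)).add ((h3.pow 2).mul (h4.pow 2))).sub
      ((h2.mul h3).mul h4)).sub h4
    refine this.congr_deriv ?_
    simp only [Pi.pow_apply, Pi.mul_apply]
    push_cast
    ring
  set E0 : ℝ := (p t0)^2 - m1 t0 * p t0 + (m3 t0)^2 * (xi t0)^2 - m2 t0 * m3 t0 * xi t0 - xi t0
    with hE0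
  set N0 : ℝ := (m1 t0)^2 + (m2 t0)^2 + (m3 t0)^2 with hN0
  set C : ℝ := 2 * |E0| + 2 * |N0| + 1 with hC
  -- eventually ξ ≥ C near t*
  have h1 : ∀ᶠ t in approachFilter tstar, C ≤ xi t := hcoll.eventually (eventually_ge_atTop C)
  rw [approachFilter, eventually_comap] at h1
  have h1' : {b : EReal | ∀ t : ℝ, (t : EReal) = b → C ≤ xi t} ∈ nhdsWithin tstar (Iio tstar) := h1
  obtain ⟨l, hl, hsub⟩ := (mem_nhdsLT_iff_exists_Ioo_subset' ht0).1 h1'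
  obtain ⟨x, hx1, hx2⟩ := EReal.lt_iff_exists_real_btwn.1 (max_lt hl ht0)
  have hx1l : l < (x : EReal) := lt_of_le_of_lt (le_max_left _ _) hx1
  have hx1t : t0 < x := EReal.coe_lt_coe_iff.1 (lt_of_le_of_lt (le_max_right _ _) hx1)
  refine ⟨2, by norm_num, x, ⟨le_of_lt hx1t, hx2⟩, ?_⟩
  intro t htx htlt
  have ht0t : t0 ≤ t := le_trans (le_of_lt hx1t) htx
  have hCle : C ≤ xi t :=
    hsub ⟨lt_of_lt_of_le hx1l (EReal.coe_le_coe_iff.2 htx), htlt⟩ t rfl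
  have hF := hEc t ht0t htlt
  have hN := hNc t ht0t htlt
  have hxi1 : (1 : ℝ) ≤ xi t := by
    have := abs_nonneg E0; have := abs_nonneg N0; rw [hC] at hCle; linarith
  have hx0 : (0 : ℝ) < xi t := lt_of_lt_of_le one_pos hxi1
  -- key estimate: m3² ξ² ≤ 3 ξ
  have h2 : (m3 t)^2 * (xi t)^2 ≤ 3 * xi t := by
    rw [hC] at hCle
    nlinarith [sq_nonneg (m3 t * xi t - m2 t), sq_nonneg (2 * p t - m1 t),
      sq_nonneg (m1 t), sq_nonneg (m2 t), sq_nonneg (m3 t),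
      le_abs_self E0, neg_abs_le E0, le_abs_self N0, neg_abs_le N0]
  have h3 : (m3 t)^2 * xi t ≤ 3 := by
    have hxx : ((m3 t)^2 * xi t) * xi t ≤ 3 * xi t := by nlinarith [h2]
    exact le_of_mul_le_mul_right hxx hx0
  have hsq : |m3 t| * Real.sqrt (xi t) = Real.sqrt ((m3 t)^2 * xi t) := by
    rw [Real.sqrt_mul (sq_nonneg _), Real.sqrt_sq_eq_abs]
  rw [hsq]
  have h4 : Real.sqrt ((m3 t)^2 * xi t) ≤ Real.sqrt 4 := Real.sqrt_le_sqrt (by linarith)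
  have h5 : Real.sqrt 4 = 2 := by
    rw [show (4 : ℝ) = 2^2 by norm_num, Real.sqrt_sq (by norm_num : (0:ℝ) ≤ 2)]
  linarith [h4, h5.le]
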